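/- Let n ≥ 2 be a natural number and let a_j denote the coefficient of X^j in P_{2,n} = (X−1)^2(X+1)^n. Then for 0 ≤ j ≤ n+2, one has a_j = 0 if and only if there exists a natural number ν ≥ 2 with n = ν²−2 and either j = ν(ν−1)/2 or j = ν(ν+1)/2. In particular, P_{2,n} has a vanishing coefficient exactly when n = ν²−2 for some integer ν ≥ 2, and in that case exactly two coefficients vanish. -/

import Mathlib

open Polynomial

private lemma coeff_formula (n k : ℕ) :
    ((X - 1) ^ 2 * (X + 1) ^ n : ℝ[X]).coeff (k + 1)
      = ((n + 2).choose (k + 1) : ℝ) - 4 * (n.choose k : ℝ) := by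
  have h : ((X - 1) ^ 2 * (X + 1) ^ n : ℝ[X])
      = (X + 1) ^ (n + 2) - 4 * (X * (X + 1) ^ n) := by ring
  rw [h, coeff_sub, coeff_X_add_one_pow]
  have h4 : ((4 : ℝ[X]) * (X * (X + 1) ^ n)).coeff (k + 1)
      = 4 * ((X + 1) ^ n : ℝ[X]).coeff k := by
    have hC : (4 : ℝ[X]) = C 4 := (map_ofNat C 4).symm
    rw [hC, coeff_C_mul, coeff_X_mul]
  rw [h4, coeff_X_add_one_pow]

private lemma choose_eq_iff (n j : ℕ) (h1 : 1 ≤ j) (h2 : j ≤ n + 1) :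
    (n + 2).choose j = 4 * n.choose (j - 1) ↔
      (n + 2) * (n + 1) = 4 * (j * (n + 2 - j)) := by
  have key1 : (n + 2).choose j * j = (n + 2) * (n + 1).choose (j - 1) := by
    have h := Nat.add_one_mul_choose_eq (n + 1) (j - 1)
    have hj' : j - 1 + 1 = j := by omega
    rw [hj'] at h
    have hn' : n + 1 + 1 = n + 2 := rfl
    rw [hn'] at h
    omega
  have key2 : n.choose (j - 1) * (n + 1) = (n + 1).choose (j - 1) * (n + 2 - j) := by
    have h := Nat.choose_mul_succ_eq n (j - 1)
    have hj' : n + 1 - (j - 1) = n + 2 - j := by omega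
    rw [hj'] at h
    exact h
  have hc : 0 < (n + 1).choose (j - 1) := Nat.choose_pos (by omega)
  set A := (n + 2).choose j with hA
  set B := n.choose (j - 1) with hB
  set c := (n + 1).choose (j - 1) with hc'
  have key1' : (A : ℤ) * j = ((n : ℤ) + 2) * c := by exact_mod_cast key1
  have key2' : (B : ℤ) * ((n : ℤ) + 1) = (c : ℤ) * ((n : ℤ) + 2 - j) := by
    have hcast : ((n + 2 - j : ℕ) : ℤ) = (n : ℤ) + 2 - j := by omega
    rw [← hcast]; exact_mod_cast key2
  constructor
  · intro h
    have h' : (A : ℤ) = 4 * B := by exact_mod_cast h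
    have h'' : (((n : ℤ) + 2) * ((n : ℤ) + 1)) * c = (4 * ((j : ℤ) * ((n : ℤ) + 2 - j))) * c := by
      linear_combination (-((n : ℤ) + 1)) * key1' + ((j : ℤ) * ((n : ℤ) + 1)) * h' +
        (4 * (j : ℤ)) * key2'
    have hcz : (c : ℤ) ≠ 0 := by exact_mod_cast hc.ne'
    have hfin := mul_right_cancel₀ hcz h''
    have hcast : ((n + 2 - j : ℕ) : ℤ) = (n : ℤ) + 2 - j := by omega
    zify [hcast]
    linarith [hfin]
  · intro h
    have h' : (((n : ℤ) + 2) * ((n : ℤ) + 1)) = 4 * ((j : ℤ) * ((n : ℤ) + 2 - j)) := by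
      have hcast : ((n + 2 - j : ℕ) : ℤ) = (n : ℤ) + 2 - j := by omega
      zify [hcast] at h
      linarith [h]
    have h'' : (A : ℤ) * ((j : ℤ) * ((n : ℤ) + 1)) = (4 * B) * ((j : ℤ) * ((n : ℤ) + 1)) := by
      linear_combination ((n : ℤ) + 1) * key1' + (c : ℤ) * h' + (-(4 * (j : ℤ))) * key2'
    have hjz : ((j : ℤ) * ((n : ℤ) + 1)) ≠ 0 := by positivity
    have hfin := mul_right_cancel₀ hjz h''
    exact_mod_cast hfin

/-- For `n ≥ 2` and `0 ≤ j ≤ n+2`, the coefficient of `X^j` in `P_{2,n} = (X-1)^2 (X+1)^n`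
vanishes if and only if `n = ν² - 2` for some `ν ≥ 2` and `j = ν(ν-1)/2` or `j = ν(ν+1)/2`. -/
theorem vanishing_coeff_P_two_n (n : ℕ) (hn : 2 ≤ n) (j : ℕ) (hj : j ≤ n + 2) :
    ((X - 1) ^ 2 * (X + 1) ^ n : ℝ[X]).coeff j = 0 ↔
      ∃ ν : ℕ, 2 ≤ ν ∧ n = ν ^ 2 - 2 ∧ (j = ν * (ν - 1) / 2 ∨ j = ν * (ν + 1) / 2) := by
  constructor
  · intro h
    rcases Nat.eq_zero_or_pos j with rfl | hj1
    · exfalso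
      rw [coeff_zero_eq_eval_zero] at h
      simp at h
    obtain ⟨k, rfl⟩ : ∃ k, j = k + 1 := ⟨j - 1, by omega⟩
    rw [coeff_formula, sub_eq_zero] at h
    have hnat : (n + 2).choose (k + 1) = 4 * n.choose k := by exact_mod_cast h
    have hk : k + 1 ≤ n + 1 := by
      by_contra hk
      have hkk : k + 1 = n + 2 := by omega
      rw [hkk, Nat.choose_self, Nat.choose_eq_zero_of_lt (by omega)] at hnat
      omega
    rw [show (n + 2).choose (k + 1) = (n + 2).choose (k + 1) from rfl,
      show n.choose k = n.choose (k + 1 - 1) from rfl,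
      choose_eq_iff n (k + 1) (by omega) hk] at hnat
    -- integer square argument
    have hz : ((n : ℤ) + 2) * ((n : ℤ) + 1)
        = 4 * (((k : ℤ) + 1) * ((n : ℤ) + 2 - ((k : ℤ) + 1))) := by
      have hcast : ((n + 2 - (k + 1) : ℕ) : ℤ) = (n : ℤ) + 2 - ((k : ℤ) + 1) := by omega
      zify [hcast] at hnat
      linarith [hnat]
    have hsq : (2 * ((k : ℤ) + 1) - ((n : ℤ) + 2)) ^ 2 = (n : ℤ) + 2 := by
      linear_combination hz
    obtain ⟨ν, hd⟩ : ∃ ν : ℕ, 2 * ((k : ℤ) + 1) - ((n : ℤ) + 2) = ν ∨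
        2 * ((k : ℤ) + 1) - ((n : ℤ) + 2) = -(ν : ℤ) :=
      ⟨(2 * ((k : ℤ) + 1) - ((n : ℤ) + 2)).natAbs, Int.natAbs_eq _⟩
    have hν2 : (ν : ℤ) ^ 2 = (n : ℤ) + 2 := by
      have : (ν : ℤ) ^ 2 = (2 * ((k : ℤ) + 1) - ((n : ℤ) + 2)) ^ 2 := by
        rcases hd with hd | hd <;> rw [hd] <;> ring
      exact this.trans hsq
    have hνn : ν ^ 2 = n + 2 := by exact_mod_cast hν2
    have hνge : 2 ≤ ν := by
      by_contra hcon
      have h1 : ν ≤ 1 := by omega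
      have h2 := Nat.pow_le_pow_left h1 2
      rw [one_pow] at h2
      omega
    refine ⟨ν, hνge, by omega, ?_⟩
    obtain ⟨m, rfl⟩ : ∃ m, ν = m + 2 := ⟨ν - 2, by omega⟩
    rcases hd with hd | hd
    · right
      have key : (m + 2) * (m + 2 + 1) = (m + 2) ^ 2 + (m + 2) := by ring
      omega
    · left
      have e : m + 2 - 1 = m + 1 := rfl
      rw [e]
      have key : (m + 2) * (m + 1) + (m + 2) = (m + 2) ^ 2 := by ring
      omega
  · rintro ⟨ν, hν2, hne, hjcase⟩
    obtain ⟨m, rfl⟩ : ∃ m, ν = m + 2 := ⟨ν - 2, by omega⟩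
    have e : m + 2 - 1 = m + 1 := rfl
    rw [e] at hjcase
    have k0 : (m + 2) ^ 2 = m * m + 4 * m + 4 := by ring
    have k1 : (m + 2) * (m + 1) = m * m + 3 * m + 2 := by ring
    have k2 : (m + 2) * (m + 2 + 1) = m * m + 5 * m + 6 := by ring
    have hnval : n = m * m + 4 * m + 2 := by omega
    obtain ⟨t1, ht1⟩ := Nat.even_mul_succ_self (m + 1)
    obtain ⟨t2, ht2⟩ := Nat.even_mul_succ_self (m + 2)
    have k1' : (m + 1) * (m + 1 + 1) = m * m + 3 * m + 2 := by ring
    have k2' : (m + 2) * (m + 2 + 1) = m * m + 5 * m + 6 := by ring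
    have h2j : 2 * j = m * m + 3 * m + 2 ∨ 2 * j = m * m + 5 * m + 6 := by
      rcases hjcase with hcase | hcase
      · left; omega
      · right; omega
    have hj1 : 1 ≤ j := by omega
    have hjle : j ≤ n + 1 := by omega
    obtain ⟨k, rfl⟩ : ∃ k, j = k + 1 := ⟨j - 1, by omega⟩
    rw [coeff_formula, sub_eq_zero]
    have hprod : (n + 2) * (n + 1) = 4 * ((k + 1) * (n + 2 - (k + 1))) := by
      have hcast : ((n + 2 - (k + 1) : ℕ) : ℤ) = (n : ℤ) + 2 - ((k : ℤ) + 1) := by omega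
      zify [hcast]
      have hzn : (n : ℤ) = (m : ℤ) * m + 4 * m + 2 := by exact_mod_cast hnval
      rw [hzn]
      rcases h2j with hcase | hcase
      · have hzj : 2 * ((k : ℤ) + 1) = (m : ℤ) * m + 3 * m + 2 := by exact_mod_cast hcase
        linear_combination (2 * ((k : ℤ) + 1) - ((m : ℤ) * m + 5 * m + 6)) * hzj
      · have hzj : 2 * ((k : ℤ) + 1) = (m : ℤ) * m + 5 * m + 6 := by exact_mod_cast hcase
        linear_combination (2 * ((k : ℤ) + 1) - ((m : ℤ) * m + 3 * m + 2)) * hzj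
    have hfin := (choose_eq_iff n (k + 1) (by omega) (by omega)).mpr hprod
    rw [show k + 1 - 1 = k from rfl] at hfin
    exact_mod_cast hfin
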